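/- Let m be a natural number and let P_m, Q_m : ℝ² → ℝ be homogeneous polynomials of degree m. Define G : ℝ → ℝ by G(θ) = cos θ · Q_m(cos θ, sin θ) − sin θ · P_m(cos θ, sin θ). Then G(θ + π) = (−1)^{m+1} G(θ) for all θ, and if G is not identically zero, the set {θ ∈ [0, π) : G(θ) = 0} is finite with at most m + 1 elements. -/

import Mathlib

open MvPolynomial Real

lemma deg2 {F : MvPolynomial (Fin 2) ℝ} {n : ℕ} (hF : F.IsHomogeneous n)
    {d : Fin 2 →₀ ℕ} (hd : d ∈ F.support) : d 0 + d 1 = n := by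
  have h := hF (MvPolynomial.mem_support_iff.mp hd)
  rw [Finsupp.weight_apply] at h
  rw [← h, Finsupp.sum,
    show ∑ i ∈ d.support, d i • (1 : Fin 2 → ℕ) i = ∑ i ∈ d.support, d i by simp,
    Finset.sum_subset (Finset.subset_univ d.support)
      (by intro i _ hi; simpa using Finsupp.notMem_support_iff.mp hi),
    Fin.sum_univ_two]

lemma homog_eval_smul {F : MvPolynomial (Fin 2) ℝ} {n : ℕ} (hF : F.IsHomogeneous n)
    (c : ℝ) (x : Fin 2 → ℝ) :
    MvPolynomial.eval (fun i => c * x i) F = c ^ n * MvPolynomial.eval x F := by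
  rw [eval_eq', eval_eq', Finset.mul_sum]
  refine Finset.sum_congr rfl fun d hd => ?_
  have h := deg2 hF hd
  rw [Fin.prod_univ_two, Fin.prod_univ_two, mul_pow, mul_pow, ← h, pow_add]
  ring

section
variable {F : MvPolynomial (Fin 2) ℝ} {n : ℕ}

noncomputable def uni (F : MvPolynomial (Fin 2) ℝ) : Polynomial ℝ :=
  ∑ d ∈ F.support, Polynomial.C (MvPolynomial.coeff d F) * Polynomial.X ^ (d 0)

lemma uni_eval (hF : F.IsHomogeneous n) (t : ℝ) :
    (uni F).eval t = MvPolynomial.eval ![t, 1] F := by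
  rw [uni, Polynomial.eval_finset_sum, eval_eq']
  refine Finset.sum_congr rfl fun d hd => ?_
  simp [Fin.prod_univ_two]

lemma uni_natDegree (hF : F.IsHomogeneous n) : (uni F).natDegree ≤ n := by
  refine Polynomial.natDegree_sum_le_of_forall_le _ _ fun d hd => ?_
  have h := deg2 hF hd
  refine le_trans (Polynomial.natDegree_C_mul_le _ _) ?_
  refine le_trans (Polynomial.natDegree_X_pow_le _) (by omega)

lemma uni_coeff_n (hF : F.IsHomogeneous n) :
    (uni F).coeff n = MvPolynomial.eval ![1, 0] F := by
  rw [uni, Polynomial.finset_sum_coeff, eval_eq']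
  refine Finset.sum_congr rfl fun d hd => ?_
  have h := deg2 hF hd
  rw [Polynomial.coeff_C_mul, Polynomial.coeff_X_pow, Fin.prod_univ_two]
  simp only [Matrix.cons_val_zero, Matrix.cons_val_one, Matrix.head_cons, one_pow, one_mul]
  by_cases h0 : d 1 = 0
  · rw [if_pos (by omega), h0, pow_zero, mul_one]
  · rw [if_neg (by omega), zero_pow h0, mul_zero]

end

lemma cot_injOn : Set.InjOn (fun θ => Real.cos θ / Real.sin θ) (Set.Ioo 0 Real.pi) := by
  intro a ha b hb h
  obtain ⟨ha0, haπ⟩ := ha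
  obtain ⟨hb0, hbπ⟩ := hb
  have hsa : Real.sin a > 0 := Real.sin_pos_of_pos_of_lt_pi ha0 haπ
  have hsb : Real.sin b > 0 := Real.sin_pos_of_pos_of_lt_pi hb0 hbπ
  simp only at h
  have h2 : Real.cos a * Real.sin b = Real.cos b * Real.sin a := by
    field_simp at h; linarith [h]
  have h3 : Real.sin (a - b) = 0 := by
    rw [Real.sin_sub]; nlinarith
  obtain ⟨k, hk⟩ := Real.sin_eq_zero_iff.mp h3
  have hπ := Real.pi_pos
  have : k = 0 := by
    by_contra hk0
    rcases lt_or_gt_of_ne hk0 with h' | h'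
    · have : (k : ℝ) ≤ -1 := by exact_mod_cast (by omega : k ≤ -1)
      nlinarith
    · have : (1 : ℝ) ≤ k := by exact_mod_cast h'
      nlinarith
  rw [this] at hk
  simp at hk
  linarith

lemma dense_sin_ne : Dense {θ : ℝ | Real.sin θ ≠ 0} := by
  have : {θ : ℝ | Real.sin θ = 0}.Countable := by
    have : {θ : ℝ | Real.sin θ = 0} ⊆ Set.range (fun k : ℤ => (k : ℝ) * Real.pi) := by
      intro x hx
      obtain ⟨k, hk⟩ := Real.sin_eq_zero_iff.mp hx
      exact ⟨k, hk⟩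
    exact (Set.countable_range _).mono this
  have h2 := this.dense_compl ℝ
  convert h2 using 1
  ext; simp

/-- Poincaré's criterion function `G(θ) = cos θ · Q_m(cos θ, sin θ) − sin θ · P_m(cos θ, sin θ)`
for homogeneous `P_m, Q_m` of degree `m` satisfies `G(θ + π) = (−1)^(m+1) G(θ)`, and if `G` is
not identically zero, it has at most `m + 1` zeros in `[0, π)`. -/
theorem stmt0 (m : ℕ) (P Q : MvPolynomial (Fin 2) ℝ)
    (hP : P.IsHomogeneous m) (hQ : Q.IsHomogeneous m)
    (G : ℝ → ℝ)
    (hG : ∀ θ : ℝ, G θ =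
      Real.cos θ * MvPolynomial.eval ![Real.cos θ, Real.sin θ] Q -
      Real.sin θ * MvPolynomial.eval ![Real.cos θ, Real.sin θ] P) :
    (∀ θ : ℝ, G (θ + Real.pi) = (-1 : ℝ) ^ (m + 1) * G θ) ∧
    ((¬ ∀ θ : ℝ, G θ = 0) →
      {θ ∈ Set.Ico (0 : ℝ) Real.pi | G θ = 0}.Finite ∧
      {θ ∈ Set.Ico (0 : ℝ) Real.pi | G θ = 0}.ncard ≤ m + 1) := by
  set F : MvPolynomial (Fin 2) ℝ := X 0 * Q - X 1 * P with hFdef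
  have hF : F.IsHomogeneous (m + 1) := by
    have h1 : (X 0 * Q : MvPolynomial (Fin 2) ℝ).IsHomogeneous (1 + m) :=
      (isHomogeneous_X ℝ 0).mul hQ
    have h2 : (X 1 * P : MvPolynomial (Fin 2) ℝ).IsHomogeneous (1 + m) :=
      (isHomogeneous_X ℝ 1).mul hP
    rw [add_comm] at h1 h2
    exact h1.sub h2
  have hGF : ∀ θ : ℝ, G θ = MvPolynomial.eval ![Real.cos θ, Real.sin θ] F := by
    intro θ
    rw [hG, hFdef]
    simp
  have hpart1 : ∀ θ : ℝ, G (θ + Real.pi) = (-1 : ℝ) ^ (m + 1) * G θ := by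
    intro θ
    rw [hGF, hGF, Real.cos_add_pi, Real.sin_add_pi]
    have hv : ![-Real.cos θ, -Real.sin θ] =
        fun i => (-1 : ℝ) * (![Real.cos θ, Real.sin θ]) i := by
      funext i; fin_cases i <;> simp
    rw [hv, homog_eval_smul hF]
  refine ⟨hpart1, fun hne => ?_⟩
  set p := uni F with hpdef
  have key : ∀ θ : ℝ, Real.sin θ ≠ 0 →
      G θ = Real.sin θ ^ (m + 1) * p.eval (Real.cos θ / Real.sin θ) := by
    intro θ hs
    rw [hGF]
    have hv : ![Real.cos θ, Real.sin θ] =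
        fun i => Real.sin θ * (![Real.cos θ / Real.sin θ, 1]) i := by
      funext i; fin_cases i <;> simp
      field_simp
    rw [hv, homog_eval_smul hF, uni_eval hF]
  have hp_ne : p ≠ 0 := by
    intro hp0
    apply hne
    have hcont : Continuous G := by
      have : G = fun θ => MvPolynomial.eval ![Real.cos θ, Real.sin θ] F := funext hGF
      rw [this]
      exact (MvPolynomial.continuous_eval F).comp
        (continuous_pi fun i => by fin_cases i <;> simp [Real.continuous_cos, Real.continuous_sin])
    have hzero : Set.EqOn G (fun _ => 0) {θ : ℝ | Real.sin θ ≠ 0} := by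
      intro θ hθ
      rw [key θ hθ, hp0]
      simp
    have := Continuous.ext_on dense_sin_ne hcont continuous_const hzero
    intro θ; rw [this]
  set S := {θ ∈ Set.Ico (0 : ℝ) Real.pi | G θ = 0} with hSdef
  set S' := {θ ∈ Set.Ioo (0 : ℝ) Real.pi | G θ = 0} with hS'def
  set f := fun θ : ℝ => Real.cos θ / Real.sin θ with hfdef
  have hmap : ∀ θ ∈ S', f θ ∈ (p.roots.toFinset : Set ℝ) := by
    rintro θ ⟨⟨h0, hπ⟩, hz⟩
    have hs : Real.sin θ > 0 := Real.sin_pos_of_pos_of_lt_pi h0 hπ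
    have := key θ (ne_of_gt hs)
    rw [hz] at this
    have hroot : p.eval (f θ) = 0 := by
      have hpow : Real.sin θ ^ (m + 1) ≠ 0 := pow_ne_zero _ (ne_of_gt hs)
      field_simp at this
      rcases mul_eq_zero.mp this.symm with h | h
      · exact absurd h hpow
      · exact h
    simp only [Multiset.mem_toFinset, Finset.coe_sort_coe, Finset.mem_coe]
    rw [Polynomial.mem_roots hp_ne]
    exact hroot
  have hinj : Set.InjOn f S' := cot_injOn.mono (fun θ hθ => hθ.1)
  have himg : f '' S' ⊆ (p.roots.toFinset : Set ℝ) := by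
    rintro _ ⟨θ, hθ, rfl⟩; exact hmap θ hθ
  have hS'fin : S'.Finite :=
    Set.Finite.of_finite_image ((p.roots.toFinset.finite_toSet).subset himg) hinj
  have hS'card : S'.ncard ≤ p.natDegree := by
    calc S'.ncard = (f '' S').ncard := (Set.ncard_image_of_injOn hinj).symm
      _ ≤ (p.roots.toFinset : Set ℝ).ncard :=
          Set.ncard_le_ncard himg (p.roots.toFinset.finite_toSet)
      _ = p.roots.toFinset.card := Set.ncard_coe_finset _
      _ ≤ Multiset.card p.roots := Multiset.toFinset_card_le _
      _ ≤ p.natDegree := Polynomial.card_roots' p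
  have hsub : S ⊆ insert 0 S' := by
    rintro θ ⟨⟨h0, hπ⟩, hz⟩
    rcases eq_or_lt_of_le h0 with h | h
    · exact Or.inl h.symm
    · exact Or.inr ⟨⟨h, hπ⟩, hz⟩
  have hSfin : S.Finite := (hS'fin.insert 0).subset hsub
  refine ⟨hSfin, ?_⟩
  have hdeg : p.natDegree ≤ m + 1 := uni_natDegree hF
  by_cases h0 : G 0 = 0
  · have hc : p.coeff (m + 1) = 0 := by
      rw [uni_coeff_n hF]
      have := hGF 0
      rw [h0] at this
      simpa using this.symm
    have hdeg' : p.natDegree ≤ m := by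
      rcases Nat.lt_or_ge p.natDegree (m + 1) with h | h
      · omega
      · exfalso
        have heq : p.natDegree = m + 1 := le_antisymm hdeg h
        apply hp_ne
        have hl : p.leadingCoeff = 0 := by
          unfold Polynomial.leadingCoeff
          rw [heq]; exact hc
        exact Polynomial.leadingCoeff_eq_zero.mp hl
    calc S.ncard ≤ (insert (0:ℝ) S').ncard :=
          Set.ncard_le_ncard hsub (hS'fin.insert 0)
      _ ≤ S'.ncard + 1 := Set.ncard_insert_le _ _
      _ ≤ m + 1 := by omega
  · have hsub' : S ⊆ S' := by
      rintro θ ⟨⟨hθ0, hπ⟩, hz⟩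
      rcases eq_or_lt_of_le hθ0 with h | h
      · exact absurd hz (by rw [← h]; exact h0)
      · exact ⟨⟨h, hπ⟩, hz⟩
    calc S.ncard ≤ S'.ncard := Set.ncard_le_ncard hsub' hS'fin
      _ ≤ m + 1 := by omega
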